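/- Let 0 < p ≤ 1 and let 𝒜 be a unital C*-algebra. For A, B ∈ 𝒜⁺⁺ there exists X ∈ 𝒜⁺⁺ with A 𝔪ₚ X = 2^{-1/p} B if and only if the spectrum of B^{-1/2} A B^{-1/2} is contained in the open interval ]0,1[ (i.e. A < B in the strict order). -/

import Mathlib

open scoped NNReal

namespace KA

variable {A : Type*} [CStarAlgebra A] [PartialOrder A] [StarOrderedRing A]

lemma isUnit_rpow {a : A} (hu : IsUnit a) (r : ℝ) (ha : 0 ≤ a := by cfc_tac) :
    IsUnit (a ^ r) :=
  isUnit_iff_exists.2 ⟨a ^ (-r), CFC.rpow_mul_rpow_neg r (hu.isStrictlyPositive ha),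
    CFC.rpow_neg_mul_rpow r (hu.isStrictlyPositive ha)⟩

lemma smul_rpow (r : ℝ≥0) (y : ℝ) (hy : 0 ≤ y) (a : A) (ha : 0 ≤ a) :
    ((r : ℝ) • a) ^ y = ((r ^ y : ℝ≥0) : ℝ) • a ^ y := by
  rw [← NNReal.smul_def, ← NNReal.smul_def]
  rw [show r • a = cfc (fun x : ℝ≥0 => r • x) a from (cfc_smul_id r a).symm]
  rw [CFC.rpow_def, CFC.rpow_def]
  rw [← cfc_comp' (fun x : ℝ≥0 => x ^ y) (fun x : ℝ≥0 => r • x) a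
      (by exact (NNReal.continuous_rpow_const hy).continuousOn) (by fun_prop)]
  rw [show (r ^ y) • cfc (fun x : ℝ≥0 => x ^ y) a = cfc (fun x : ℝ≥0 => (r ^ y) • x ^ y) a from
    (cfc_smul (r ^ y) (fun x : ℝ≥0 => x ^ y) a
      ((NNReal.continuous_rpow_const hy).continuousOn)).symm]
  exact cfc_congr fun x _ => by simp [smul_eq_mul, NNReal.mul_rpow]

lemma spec_real_eq_image (a : A) (ha : 0 ≤ a) :
    spectrum ℝ a = (fun x : ℝ≥0 => (x : ℝ)) '' spectrum ℝ≥0 a :=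
  ((SpectrumRestricts.nnreal_of_nonneg ha).algebraMap_image).symm

lemma spec_pos {a : A} (ha : 0 ≤ a) (hu : IsUnit a) : spectrum ℝ a ⊆ Set.Ioi 0 := fun x hx =>
  (spectrum_nonneg_of_nonneg ha hx).lt_of_ne' fun h =>
    spectrum.zero_notMem ℝ hu (h ▸ hx)

lemma rpow_spectrum (a : A) {y : ℝ} (hy : 0 < y) (ha : 0 ≤ a) :
    spectrum ℝ≥0 (a ^ y) = (fun x : ℝ≥0 => x ^ y) '' spectrum ℝ≥0 a := by
  rw [CFC.rpow_def]
  exact cfc_map_spectrum _ a (hf := (NNReal.continuous_rpow_const hy.le).continuousOn) (ha := ha)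

lemma spec_rpow_Ioi_iff {d : A} (hd : 0 ≤ d) (hu : IsUnit d) {y : ℝ} (hy : 0 < y) :
    spectrum ℝ (d ^ y) ⊆ Set.Ioi 1 ↔ spectrum ℝ d ⊆ Set.Ioi 1 := by
  have hd' : 0 ∉ spectrum ℝ≥0 d := spectrum.zero_notMem ℝ≥0 hu
  rw [spec_real_eq_image _ hd, spec_real_eq_image _ (CFC.rpow_nonneg (a := d) (y := y)),
    rpow_spectrum d hy hd, Set.image_image]
  simp only [Set.image_subset_iff]
  refine ⟨fun h x hx => ?_, fun h x hx => ?_⟩ <;>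
  · have hx0 : (0 : ℝ) < x := by
      have : x ≠ 0 := fun h0 => hd' (h0 ▸ hx)
      positivity
    have h1 := h hx
    simp only [Set.mem_preimage, Set.mem_Ioi, NNReal.coe_rpow] at h1 ⊢
    first
    | exact ((Real.one_lt_rpow_iff_of_pos hx0).mp h1).elim (fun h => h.1)
        (fun h => absurd hy (not_lt.2 h.2.le))
    | exact (Real.one_lt_rpow_iff_of_pos hx0).mpr (Or.inl ⟨h1, hy⟩)

end KA

/-- The positive definite cone of a unital C*-algebra: the invertible positive elements. -/
def posDefCone (A : Type*) [CStarAlgebra A] [PartialOrder A] [StarOrderedRing A] : Set A :=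
  {a : A | 0 ≤ a ∧ IsUnit a}

variable {A : Type*} [CStarAlgebra A] [PartialOrder A] [StarOrderedRing A]

/-- The Kubo–Ando `p`-th power mean
`a^(1/2) ((1 + (a^(-1/2) b a^(-1/2))^p)/2)^(1/p) a^(1/2)` on the positive definite cone. -/
noncomputable def kuboAndoPowerMean (p : ℝ) (a b : A) : A :=
  a ^ ((2 : ℝ)⁻¹) *
    ((2 : ℝ)⁻¹ • (1 + (a ^ (-(2 : ℝ)⁻¹) * b * a ^ (-(2 : ℝ)⁻¹)) ^ p)) ^ p⁻¹ *
    a ^ ((2 : ℝ)⁻¹)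

/-- For `0 < p ≤ 1` and positive definite `a, b` in a unital C*-algebra,
the equation `a 𝔪ₚ x = 2^(-1/p) b` has a positive definite solution `x` iff the spectrum of
`b^(-1/2) a b^(-1/2)` is contained in the open interval `]0,1[`. -/
theorem kuboAndo_solvable_iff_strict_lt (p : ℝ) (hp0 : 0 < p) (hp1 : p ≤ 1)
    {a b : A} (ha : a ∈ posDefCone A) (hb : b ∈ posDefCone A) :
    (∃ x ∈ posDefCone A, kuboAndoPowerMean p a x = ((2 : ℝ) ^ (-p⁻¹)) • b) ↔
    spectrum ℝ (b ^ (-(2 : ℝ)⁻¹) * a * b ^ (-(2 : ℝ)⁻¹)) ⊆ Set.Ioo (0 : ℝ) 1 := by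
  obtain ⟨ha0, hau⟩ := ha
  obtain ⟨hb0, hbu⟩ := hb
  have hp : p ≠ 0 := hp0.ne'
  have hpinv : (0 : ℝ) < p⁻¹ := by positivity
  have hsa : 0 ∉ spectrum ℝ≥0 a := spectrum.zero_notMem ℝ≥0 hau
  have hsb : 0 ∉ spectrum ℝ≥0 b := spectrum.zero_notMem ℝ≥0 hbu
  set asq : A := a ^ ((2 : ℝ)⁻¹) with hasq_def
  set asqi : A := a ^ (-(2 : ℝ)⁻¹) with hasqi_def
  set bsq : A := b ^ ((2 : ℝ)⁻¹) with hbsq_def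
  set bsqi : A := b ^ (-(2 : ℝ)⁻¹) with hbsqi_def
  have hasq0 : 0 ≤ asq := CFC.rpow_nonneg
  have hasqi0 : 0 ≤ asqi := CFC.rpow_nonneg
  have hbsq0 : 0 ≤ bsq := CFC.rpow_nonneg
  have hbsqi0 : 0 ≤ bsqi := CFC.rpow_nonneg
  have hasqu : IsUnit asq := KA.isUnit_rpow hau _
  have hasqiu : IsUnit asqi := KA.isUnit_rpow hau _
  have hbsqiu : IsUnit bsqi := KA.isUnit_rpow hbu _
  have h1 : asq * asqi = 1 := CFC.rpow_mul_rpow_neg _ (hau.isStrictlyPositive ha0)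
  have h2 : asqi * asq = 1 := CFC.rpow_neg_mul_rpow _ (hau.isStrictlyPositive ha0)
  have h3 : bsq * bsqi = 1 := CFC.rpow_mul_rpow_neg _ (hbu.isStrictlyPositive hb0)
  have h4 : bsqi * bsq = 1 := CFC.rpow_neg_mul_rpow _ (hbu.isStrictlyPositive hb0)
  have haa : asq * asq = a := by
    rw [hasq_def, ← CFC.rpow_add hau]
    norm_num
    exact CFC.rpow_one a
  have hbb1 : b * bsqi = bsq := by
    conv_lhs => rw [← CFC.rpow_one b hb0]
    rw [hbsqi_def, hbsq_def, ← CFC.rpow_add hbu]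
    norm_num
  have hbb2 : bsqi * b = bsq := by
    conv_lhs => rw [← CFC.rpow_one b hb0]
    rw [hbsqi_def, hbsq_def, ← CFC.rpow_add hbu]
    norm_num
  -- cancellation helpers in assoc-normal form
  have ca : ∀ x : A, asq * (asqi * x) = x := fun x => by rw [← mul_assoc, h1, one_mul]
  have ca' : ∀ x : A, asqi * (asq * x) = x := fun x => by rw [← mul_assoc, h2, one_mul]
  have cb : ∀ x : A, bsq * (bsqi * x) = x := fun x => by rw [← mul_assoc, h3, one_mul]
  have cb' : ∀ x : A, bsqi * (bsq * x) = x := fun x => by rw [← mul_assoc, h4, one_mul]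
  have cbb : ∀ x : A, b * (bsqi * x) = bsq * x := fun x => by rw [← mul_assoc, hbb1]
  have cbb' : ∀ x : A, bsqi * (b * x) = bsq * x := fun x => by rw [← mul_assoc, hbb2]
  set d : A := asqi * b * asqi with hd_def
  set e : A := bsqi * a * bsqi with he_def
  have hd0 : 0 ≤ d := by
    have := star_left_conjugate_nonneg hb0 asqi
    rwa [(IsSelfAdjoint.of_nonneg hasqi0).star_eq] at this
  have hdu : IsUnit d := (hasqiu.mul hbu).mul hasqiu
  have he0 : 0 ≤ e := by
    have := star_left_conjugate_nonneg ha0 bsqi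
    rwa [(IsSelfAdjoint.of_nonneg hbsqi0).star_eq] at this
  have heu : IsUnit e := (hbsqiu.mul hau).mul hbsqiu
  -- Lemma A : spectrum of e in (0,1) iff spectrum of d in (1,∞)
  have keyA : spectrum ℝ e ⊆ Set.Ioo (0 : ℝ) 1 ↔ spectrum ℝ d ⊆ Set.Ioi 1 := by
    have hD1 : d * (asq * (bsqi * (bsqi * asq))) = 1 := by
      rw [hd_def]
      simp only [mul_assoc, ca, ca', cb, cb', cbb, cbb', h1, h2, h3, h4]
    have hD2 : (asq * (bsqi * (bsqi * asq))) * d = 1 := by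
      rw [hd_def]
      simp only [mul_assoc, ca, ca', cb, cb', cbb, cbb', h1, h2, h3, h4]
    set D : Aˣ := ⟨d, asq * (bsqi * (bsqi * asq)), hD1, hD2⟩ with hD_def
    have hw1 : (bsqi * asq) * (asqi * bsq) = 1 := by
      simp only [mul_assoc, ca, ca', cb, cb', h1, h2, h3, h4]
    have hw2 : (asqi * bsq) * (bsqi * asq) = 1 := by
      simp only [mul_assoc, ca, ca', cb, cb', h1, h2, h3, h4]
    set w : Aˣ := ⟨bsqi * asq, asqi * bsq, hw1, hw2⟩ with hw_def
    have hconj : (↑w * ↑D⁻¹ * ↑w⁻¹ : A) = e := by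
      show (bsqi * asq) * (asq * (bsqi * (bsqi * asq))) * (asqi * bsq) = e
      rw [he_def]
      have caa : ∀ x : A, asq * (asq * x) = a * x := fun x => by rw [← mul_assoc, haa]
      simp only [mul_assoc, ca, ca', cb, cb', caa, h1, h2, h3, h4, mul_one]
    have hspec : spectrum ℝ e = (spectrum ℝ d)⁻¹ := by
      rw [← hconj, spectrum.units_conjugate]
      exact (spectrum.map_inv D).symm
    rw [hspec]
    have hdpos := KA.spec_pos hd0 hdu
    constructor
    · intro h x hx
      have hx0 : (0 : ℝ) < x := hdpos hx
      have hxi : x⁻¹ ∈ (spectrum ℝ d)⁻¹ := by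
        rw [Set.mem_inv, inv_inv]; exact hx
      have := h hxi
      rw [Set.mem_Ioi]
      rw [Set.mem_Ioo] at this
      have : 1 < x⁻¹⁻¹ := one_lt_inv_iff₀.mpr ⟨this.1, this.2⟩
      simpa using this
    · intro h x hx
      rw [Set.mem_inv] at hx
      have h1x : 1 < x⁻¹ := h hx
      have hx0 : 0 < x⁻¹ := lt_trans one_pos h1x
      rw [Set.mem_Ioo]
      exact ⟨(one_lt_inv_iff₀.mp h1x).1, (one_lt_inv_iff₀.mp h1x).2⟩
  rw [keyA]
  have hcoe2 : (((2 : ℝ≥0) ^ (-p⁻¹) : ℝ≥0) : ℝ) = (2 : ℝ) ^ (-p⁻¹) := by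
    rw [NNReal.coe_rpow, NNReal.coe_ofNat]
  have hpow2 : ((2 : ℝ≥0) ^ (-p⁻¹)) ^ (p : ℝ) = (2 : ℝ≥0)⁻¹ := by
    rw [← NNReal.rpow_mul, neg_mul, inv_mul_cancel₀ hp, NNReal.rpow_neg_one]
  have hone : (1 : A) = algebraMap ℝ A 1 := (map_one _).symm
  constructor
  · rintro ⟨x, ⟨hx0, hxu⟩, heq⟩
    rw [kuboAndoPowerMean, ← hasq_def, ← hasqi_def] at heq
    set c : A := asqi * x * asqi with hc_def
    have hc0 : 0 ≤ c := by
      have := star_left_conjugate_nonneg hx0 asqi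
      rwa [(IsSelfAdjoint.of_nonneg hasqi0).star_eq] at this
    have hcu : IsUnit c := (hasqiu.mul hxu).mul hasqiu
    set Z : A := (2 : ℝ)⁻¹ • (1 + c ^ p) with hZ_def
    have hZ0 : 0 ≤ Z :=
      smul_nonneg (by norm_num) (add_nonneg zero_le_one CFC.rpow_nonneg)
    have hcp_pos : spectrum ℝ (c ^ p) ⊆ Set.Ioi 0 :=
      KA.spec_pos CFC.rpow_nonneg (KA.isUnit_rpow hcu p)
    have h1cp : spectrum ℝ (1 + c ^ p) ⊆ Set.Ioi 0 := by
      intro t ht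
      rw [hone, ← spectrum.singleton_add_eq] at ht
      obtain ⟨u, hu, v, hv, rfl⟩ := Set.mem_add.mp ht
      rw [Set.mem_singleton_iff] at hu
      subst hu
      have := hcp_pos hv
      rw [Set.mem_Ioi] at this ⊢
      linarith
    have hZu : IsUnit Z := by
      rw [hZ_def, Algebra.smul_def]
      exact ((isUnit_iff_ne_zero.2 (by norm_num : (2 : ℝ)⁻¹ ≠ 0)).map (algebraMap ℝ A)).mul
        (spectrum.isUnit_of_zero_notMem ℝ fun h0 => lt_irrefl (0 : ℝ) (h1cp h0))
    have hd' : asqi * (b * asqi) = d := by rw [hd_def, mul_assoc]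
    have hM : Z ^ p⁻¹ = ((2 : ℝ) ^ (-p⁻¹)) • d := by
      have h' : asqi * (asq * Z ^ p⁻¹ * asq) * asqi
          = asqi * (((2 : ℝ) ^ (-p⁻¹)) • b) * asqi := by rw [heq]
      rw [mul_smul_comm, smul_mul_assoc] at h'
      simp only [mul_assoc, h1, h2, mul_one, ca', ca] at h'
      rw [h', hd']
    have hZd : Z = (2 : ℝ)⁻¹ • d ^ p := by
      have e1 : (Z ^ p⁻¹) ^ p = Z := by
        rw [CFC.rpow_rpow Z p⁻¹ p (by positivity) (hZu.isStrictlyPositive hZ0),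
          inv_mul_cancel₀ hp, CFC.rpow_one Z hZ0]
      rw [← e1, hM, ← hcoe2, KA.smul_rpow _ p hp0.le d hd0, hpow2]
      norm_num
    have hsum : 1 + c ^ p = d ^ p := by
      have h2ne : (2 : ℝ)⁻¹ ≠ 0 := by norm_num
      apply smul_right_injective A h2ne
      show (2 : ℝ)⁻¹ • (1 + c ^ p) = (2 : ℝ)⁻¹ • d ^ p
      rw [← hZ_def]
      exact hZd
    have hdp : spectrum ℝ (d ^ p) ⊆ Set.Ioi 1 := by
      intro t ht
      rw [← hsum, hone, ← spectrum.singleton_add_eq] at ht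
      obtain ⟨u, hu, v, hv, rfl⟩ := Set.mem_add.mp ht
      rw [Set.mem_singleton_iff] at hu
      subst hu
      have := hcp_pos hv
      rw [Set.mem_Ioi] at this ⊢
      linarith
    exact (KA.spec_rpow_Ioi_iff hd0 hdu hp0).1 hdp
  · intro h
    have hdp : spectrum ℝ (d ^ p) ⊆ Set.Ioi 1 := (KA.spec_rpow_Ioi_iff hd0 hdu hp0).2 h
    set y : A := d ^ p - 1 with hy_def
    have hyspec : spectrum ℝ y ⊆ Set.Ioi 0 := by
      intro t ht
      rw [hy_def, hone, ← spectrum.sub_singleton_eq] at ht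
      obtain ⟨u, hu, v, hv, rfl⟩ := Set.mem_sub.mp ht
      rw [Set.mem_singleton_iff] at hv
      subst hv
      have := hdp hu
      rw [Set.mem_Ioi] at this ⊢
      linarith
    have hysa : IsSelfAdjoint y :=
      (IsSelfAdjoint.of_nonneg (CFC.rpow_nonneg (a := d) (y := p))).sub (IsSelfAdjoint.one A)
    have hy0 : 0 ≤ y :=
      (StarOrderedRing.nonneg_iff_spectrum_nonneg (R := ℝ) y hysa).2
        fun t ht => (hyspec ht).le
    have hyu : IsUnit y :=
      spectrum.isUnit_of_zero_notMem ℝ fun h0 => lt_irrefl (0 : ℝ) (hyspec h0)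
    refine ⟨asq * y ^ p⁻¹ * asq, ⟨?_, ?_⟩, ?_⟩
    · have := star_left_conjugate_nonneg (CFC.rpow_nonneg (a := y) (y := p⁻¹)) asq
      rwa [(IsSelfAdjoint.of_nonneg hasq0).star_eq] at this
    · exact (hasqu.mul (KA.isUnit_rpow hyu _)).mul hasqu
    · rw [kuboAndoPowerMean, ← hasq_def, ← hasqi_def]
      have hfold : asqi * (asq * y ^ p⁻¹ * asq) * asqi = y ^ p⁻¹ := by
        simp only [mul_assoc, h1, h2, mul_one, ca', ca]
      rw [hfold]
      have hyp : (y ^ p⁻¹) ^ p = y := by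
        rw [CFC.rpow_rpow y p⁻¹ p (by positivity) (hyu.isStrictlyPositive hy0),
          inv_mul_cancel₀ hp, CFC.rpow_one y hy0]
      rw [hyp, hy_def, show (1 : A) + (d ^ p - 1) = d ^ p by abel]
      have hdpi : (d ^ p) ^ p⁻¹ = d := by
        rw [CFC.rpow_rpow d p p⁻¹ hp (hdu.isStrictlyPositive hd0),
          mul_inv_cancel₀ hp, CFC.rpow_one d hd0]
      have hsc : ((2 : ℝ)⁻¹ • d ^ p) ^ p⁻¹ = ((2 : ℝ) ^ (-p⁻¹)) • d := by
        rw [show ((2 : ℝ)⁻¹ : ℝ) = (((2 : ℝ≥0)⁻¹ : ℝ≥0) : ℝ) by norm_num,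
          KA.smul_rpow _ p⁻¹ hpinv.le (d ^ p) CFC.rpow_nonneg, hdpi]
        congr 1
        rw [NNReal.coe_rpow]
        push_cast
        rw [Real.inv_rpow (by norm_num), ← Real.rpow_neg (by norm_num)]
      rw [hsc, mul_smul_comm, smul_mul_assoc]
      congr 1
      rw [hd_def]
      simp only [mul_assoc, ca, h2, mul_one]
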